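/- Let $G$ be a countable discrete group and $\psi: G \to \mathbb{C}$ a finitely supported positive definite function with $\psi(e) = 1$. Then there exists a unit vector $\eta \in \ell_2(G)$ such that $\langle \eta, g\cdot \eta\rangle = \psi(g)$ for all $g \in G$, where $(g\cdot\eta)_h = \eta_{g^{-1}h}$. -/

import Mathlib

open scoped ComplexConjugate

open scoped ComplexConjugate ENNReal InnerProductSpace

noncomputable section PDAux

namespace PDAux

set_option synthInstance.maxHeartbeats 1000000
set_option maxHeartbeats 1000000
set_option linter.unusedSectionVars false

variable {G : Type*}

lemma memℓp_comp (e : G ≃ G) (f : lp (fun _ : G => ℂ) 2) :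
    Memℓp (fun h => f (e h)) 2 := by
  apply memℓp_gen
  have h := (lp.memℓp f).summable (p := 2) (by norm_num)
  exact (e.summable_iff (f := fun i => ‖f i‖ ^ (2 : ℝ≥0∞).toReal)).2 h

/-- Reindexing by a bijection as a linear isometry equivalence of `ℓ²(G)`. -/
def lpComp (e : G ≃ G) : lp (fun _ : G => ℂ) 2 ≃ₗᵢ[ℂ] lp (fun _ : G => ℂ) 2 where
  toFun f := ⟨fun h => f (e h), memℓp_comp e f⟩
  invFun f := ⟨fun h => f (e.symm h), memℓp_comp e.symm f⟩
  map_add' f g := by ext h; simp [lp.coeFn_add]; rfl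
  map_smul' c f := by ext h; simp [lp.coeFn_smul]
  left_inv f := by ext h; simp
  right_inv f := by ext h; simp
  norm_map' f := by
    rw [lp.norm_eq_tsum_rpow (by norm_num) , lp.norm_eq_tsum_rpow (by norm_num)]
    congr 1
    exact e.tsum_eq (f := fun i => ‖f i‖ ^ (2 : ℝ≥0∞).toReal)

@[simp] lemma lpComp_apply (e : G ≃ G) (f : lp (fun _ : G => ℂ) 2) (h : G) :
    (lpComp e f : G → ℂ) h = f (e h) := rfl

open ContinuousLinearMap in
/-- Reindexing as a continuous linear map. -/
def clm (e : G ≃ G) : lp (fun _ : G => ℂ) 2 →L[ℂ] lp (fun _ : G => ℂ) 2 :=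
  (lpComp e).toLinearIsometry.toContinuousLinearMap

@[simp] lemma clm_apply (e : G ≃ G) (f : lp (fun _ : G => ℂ) 2) (h : G) :
    (clm e f : G → ℂ) h = f (e h) := rfl

lemma clm_mul (e e' : G ≃ G) : clm e * clm e' = clm (e.trans e') := by
  ext f h
  simp [ContinuousLinearMap.mul_apply]

lemma clm_refl : clm (Equiv.refl G) = 1 := by
  ext f h
  simp [ContinuousLinearMap.one_apply]

lemma adjoint_clm (e : G ≃ G) :
    ContinuousLinearMap.adjoint (clm e) = clm e.symm := by
  symm
  rw [ContinuousLinearMap.eq_adjoint_iff]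
  intro x y
  rw [lp.inner_eq_tsum, lp.inner_eq_tsum]
  have h1 : ∑' c, conj ((x : G → ℂ) (e.symm (e c))) * (y : G → ℂ) (e c)
      = ∑' c, conj ((x : G → ℂ) (e.symm c)) * (y : G → ℂ) c :=
    e.tsum_eq (f := fun c => conj ((x : G → ℂ) (e.symm c)) * (y : G → ℂ) c)
  simp only [Equiv.symm_apply_apply] at h1
  simpa [mul_comm] using h1.symm

variable [Group G]

/-- Right translation operator. -/
def rho (s : G) : lp (fun _ : G => ℂ) 2 →L[ℂ] lp (fun _ : G => ℂ) 2 :=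
  clm (Equiv.mulRight s)

/-- Left translation operator. -/
def lam (g : G) : lp (fun _ : G => ℂ) 2 →L[ℂ] lp (fun _ : G => ℂ) 2 :=
  clm (Equiv.mulLeft g⁻¹)

@[simp] lemma rho_apply (s : G) (f : lp (fun _ : G => ℂ) 2) (h : G) :
    (rho s f : G → ℂ) h = f (h * s) := rfl

@[simp] lemma lam_apply (g : G) (f : lp (fun _ : G => ℂ) 2) (h : G) :
    (lam g f : G → ℂ) h = f (g⁻¹ * h) := rfl

lemma adjoint_rho (s : G) : ContinuousLinearMap.adjoint (rho s) = rho s⁻¹ := by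
  rw [rho, adjoint_clm]; congr 1; ext h; simp

lemma adjoint_lam (g : G) : ContinuousLinearMap.adjoint (lam g) = lam g⁻¹ := by
  rw [lam, adjoint_clm]; congr 1; ext h; simp

lemma lam_mul_lam (g g' : G) : lam g * lam g' = lam (g * g') := by
  rw [lam, lam, lam, clm_mul]; congr 1; ext h; simp [mul_assoc]

lemma lam_mul_rho (g s : G) : lam g * rho s = rho s * lam g := by
  rw [lam, rho, clm_mul, clm_mul]; congr 1; ext h; simp [mul_assoc]

end PDAux

end PDAux

noncomputable section PDAux2
namespace PDAux
set_option synthInstance.maxHeartbeats 1000000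
set_option maxHeartbeats 1000000
set_option linter.unusedSectionVars false

variable {G : Type*} [Group G]

/-- The convolution operator. -/
def Top (ψ : G → ℂ) (S : Finset G) : lp (fun _ : G => ℂ) 2 →L[ℂ] lp (fun _ : G => ℂ) 2 :=
  ∑ s ∈ S, ψ s • rho s

lemma Top_apply (ψ : G → ℂ) (S : Finset G) (f : lp (fun _ : G => ℂ) 2) (h : G) :
    (Top ψ S f : G → ℂ) h = ∑ s ∈ S, ψ s * f (h * s) := by
  rw [Top, ContinuousLinearMap.sum_apply, lp.coeFn_sum, Finset.sum_apply]
  simp [lp.coeFn_smul]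

lemma lam_mul_Top (ψ : G → ℂ) (S : Finset G) (g : G) :
    lam g * Top ψ S = Top ψ S * lam g := by
  simp only [Top, Finset.mul_sum, Finset.sum_mul, mul_smul_comm, smul_mul_assoc, lam_mul_rho]

end PDAux
end PDAux2

noncomputable section PDAux3
namespace PDAux
set_option synthInstance.maxHeartbeats 1000000
set_option maxHeartbeats 1000000
set_option linter.unusedSectionVars false

variable {G : Type*} [Group G]

lemma isSelfAdjoint_Top (ψ : G → ℂ) (hfin : (Function.support ψ).Finite)
    (hsymm : ∀ g : G, ψ g⁻¹ = conj (ψ g)) :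
    IsSelfAdjoint (Top ψ hfin.toFinset) := by
  rw [IsSelfAdjoint, ContinuousLinearMap.star_eq_adjoint, Top, map_sum]
  have h1 : ∀ s : G, ContinuousLinearMap.adjoint (ψ s • rho s) = conj (ψ s) • rho s⁻¹ := by
    intro s
    rw [map_smulₛₗ (ContinuousLinearMap.adjoint :
      (lp (fun _ : G => ℂ) 2 →L[ℂ] lp (fun _ : G => ℂ) 2) ≃ₗᵢ⋆[ℂ]
      (lp (fun _ : G => ℂ) 2 →L[ℂ] lp (fun _ : G => ℂ) 2)) (ψ s) (rho s), adjoint_rho]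
  simp only [h1]
  refine Finset.sum_equiv (Equiv.inv G) (fun s => ?_) (fun s hs => ?_)
  · simp only [Equiv.inv_apply, Set.Finite.mem_toFinset, Function.mem_support]
    rw [hsymm]
    exact (not_iff_not.2 ⟨fun h => by rw [h, map_zero], fun h => by
      simpa using congrArg conj h⟩)
  · simp only [Equiv.inv_apply]
    rw [hsymm]

end PDAux
end PDAux3

noncomputable section PDAux4
namespace PDAux
set_option synthInstance.maxHeartbeats 1000000
set_option maxHeartbeats 1000000
set_option linter.unusedSectionVars false

variable {G : Type*} [Group G]

lemma coe_sum_single [DecidableEq G] (F : Finset G) (f : lp (fun _ : G => ℂ) 2) (h : G) :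
    ((∑ i ∈ F, lp.single 2 i (f i) : lp (fun _ : G => ℂ) 2) : G → ℂ) h
      = if h ∈ F then f h else 0 := by
  classical
  rw [lp.coeFn_sum, Finset.sum_apply]
  simp [lp.coeFn_sum, lp.single_apply, Finset.sum_apply, Finset.sum_pi_single]

lemma Top_sum_single_apply [DecidableEq G] (ψ : G → ℂ) (hfin : (Function.support ψ).Finite)
    (F : Finset G) (f : lp (fun _ : G => ℂ) 2) (h : G) :
    (Top ψ hfin.toFinset (∑ i ∈ F, lp.single 2 i (f i)) : G → ℂ) h
      = ∑ k ∈ F, ψ (h⁻¹ * k) * f k := by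
  classical
  rw [Top_apply]
  have step1 : ∀ s : G, ψ s * ((∑ i ∈ F, lp.single 2 i (f i) : lp (fun _ : G => ℂ) 2) : G → ℂ) (h * s)
      = ∑ k ∈ F, if k = h * s then ψ s * f k else 0 := by
    intro s
    rw [coe_sum_single]
    by_cases hm : h * s ∈ F
    · rw [Finset.sum_ite_eq' F (h * s) (fun k => ψ s * f k), if_pos hm, if_pos hm]
    · rw [Finset.sum_ite_eq' F (h * s) (fun k => ψ s * f k), if_neg hm, if_neg hm, mul_zero]
  simp only [step1]
  rw [Finset.sum_comm]
  refine Finset.sum_congr rfl fun k hk => ?_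
  have hcond : ∀ s : G, (k = h * s) ↔ (s = h⁻¹ * k) := by
    intro s
    constructor
    · intro hh; rw [hh]; group
    · intro hh; rw [hh]; group
  simp only [hcond]
  rw [Finset.sum_ite_eq' hfin.toFinset (h⁻¹ * k) (fun s => ψ s * f k)]
  by_cases hm : h⁻¹ * k ∈ hfin.toFinset
  · rw [if_pos hm]
  · rw [if_neg hm]
    have : ψ (h⁻¹ * k) = 0 := by
      by_contra hne
      exact hm (hfin.mem_toFinset.2 hne)
    rw [this, zero_mul]

end PDAux
end PDAux4

noncomputable section PDAux5
namespace PDAux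
set_option synthInstance.maxHeartbeats 1000000
set_option maxHeartbeats 1000000
set_option linter.unusedSectionVars false

variable {G : Type*} [Group G]

lemma inner_Top_sum_single [DecidableEq G] (ψ : G → ℂ) (hfin : (Function.support ψ).Finite)
    (F : Finset G) (f : lp (fun _ : G => ℂ) 2) :
    (inner ℂ (∑ i ∈ F, lp.single 2 i (f i))
        (Top ψ hfin.toFinset (∑ i ∈ F, lp.single 2 i (f i))) : ℂ)
      = ∑ h ∈ F, ∑ k ∈ F, conj (f h) * (ψ (h⁻¹ * k) * f k) := by
  rw [sum_inner]
  refine Finset.sum_congr rfl fun h hh => ?_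
  rw [lp.inner_single_left]
  rw [Top_sum_single_apply ψ hfin F f h]
  rw [RCLike.inner_apply, Finset.sum_mul]
  exact Finset.sum_congr rfl fun _ _ => mul_comm _ _

lemma pos_on_finsupp [DecidableEq G] (ψ : G → ℂ) (hfin : (Function.support ψ).Finite)
    (hpd : ∀ (n : ℕ) (g : Fin n → G) (c : Fin n → ℂ),
      0 ≤ (∑ i, ∑ j, c i * conj (c j) * ψ ((g j)⁻¹ * g i)).re ∧
        (∑ i, ∑ j, c i * conj (c j) * ψ ((g j)⁻¹ * g i)).im = 0)
    (F : Finset G) (f : lp (fun _ : G => ℂ) 2) :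
    0 ≤ (inner ℂ (∑ i ∈ F, lp.single 2 i (f i))
        (Top ψ hfin.toFinset (∑ i ∈ F, lp.single 2 i (f i))) : ℂ).re := by
  rw [inner_Top_sum_single ψ hfin F f]
  set e := F.equivFin.symm with he
  obtain ⟨hre, -⟩ := hpd F.card (fun i => (e i : G)) (fun i => f ((e i : G)))
  have hA : ∀ a : G, ∑ j : Fin F.card, f a * conj (f (e j : G)) * ψ ((e j : G)⁻¹ * a)
      = ∑ y : F, f a * conj (f (y : G)) * ψ ((y : G)⁻¹ * a) :=
    fun a => Equiv.sum_comp e (fun y : F => f a * conj (f (y : G)) * ψ ((y : G)⁻¹ * a))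
  have key : (∑ i : Fin F.card, ∑ j : Fin F.card,
        f (e i : G) * conj (f (e j : G)) * ψ ((e j : G)⁻¹ * (e i : G)))
      = ∑ h ∈ F, ∑ k ∈ F, conj (f h) * (ψ (h⁻¹ * k) * f k) := by
    calc (∑ i : Fin F.card, ∑ j : Fin F.card,
            f (e i : G) * conj (f (e j : G)) * ψ ((e j : G)⁻¹ * (e i : G)))
        = ∑ i : Fin F.card, ∑ y : F, f (e i : G) * conj (f (y : G)) * ψ ((y : G)⁻¹ * (e i : G)) :=
          Finset.sum_congr rfl fun i _ => hA _
      _ = ∑ x : F, ∑ y : F, f (x : G) * conj (f (y : G)) * ψ ((y : G)⁻¹ * (x : G)) :=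
          Equiv.sum_comp e (fun x : F =>
            ∑ y : F, f (x : G) * conj (f (y : G)) * ψ ((y : G)⁻¹ * (x : G)))
      _ = ∑ x ∈ F, ∑ y : F, f x * conj (f (y : G)) * ψ ((y : G)⁻¹ * x) :=
          Finset.sum_coe_sort F (fun a => ∑ y : F, f a * conj (f (y : G)) * ψ ((y : G)⁻¹ * a))
      _ = ∑ x ∈ F, ∑ y ∈ F, f x * conj (f y) * ψ (y⁻¹ * x) :=
          Finset.sum_congr rfl fun a _ =>
            Finset.sum_coe_sort F (fun b => f a * conj (f b) * ψ (b⁻¹ * a))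
      _ = ∑ h ∈ F, ∑ k ∈ F, conj (f h) * (ψ (h⁻¹ * k) * f k) := by
          rw [Finset.sum_comm]
          exact Finset.sum_congr rfl fun a _ => Finset.sum_congr rfl fun b _ => by ring
  rw [← key]
  exact hre

end PDAux
end PDAux5

noncomputable section PDAux6
namespace PDAux
set_option synthInstance.maxHeartbeats 1000000
set_option maxHeartbeats 1000000
set_option linter.unusedSectionVars false

variable {G : Type*} [Group G]

lemma isPositive_Top [DecidableEq G] (ψ : G → ℂ) (hfin : (Function.support ψ).Finite)
    (hsymm : ∀ g : G, ψ g⁻¹ = conj (ψ g))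
    (hpd : ∀ (n : ℕ) (g : Fin n → G) (c : Fin n → ℂ),
      0 ≤ (∑ i, ∑ j, c i * conj (c j) * ψ ((g j)⁻¹ * g i)).re ∧
        (∑ i, ∑ j, c i * conj (c j) * ψ ((g j)⁻¹ * g i)).im = 0) :
    (Top ψ hfin.toFinset).IsPositive := by
  refine ⟨(isSelfAdjoint_Top ψ hfin hsymm).isSymmetric, fun x => ?_⟩
  have hpos : 0 ≤ (inner ℂ x (Top ψ hfin.toFinset x) : ℂ).re := by
    have hcont : Continuous fun y : lp (fun _ : G => ℂ) 2 =>
        (inner ℂ y (Top ψ hfin.toFinset y) : ℂ).re :=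
      Complex.continuous_re.comp (continuous_id.inner ((Top ψ hfin.toFinset).continuous))
    have hlim : Filter.Tendsto (fun F : Finset G => ∑ i ∈ F, lp.single 2 i (x i))
        Filter.atTop (nhds x) := lp.hasSum_single (by norm_num) x
    have h2 := (hcont.tendsto x).comp hlim
    exact ge_of_tendsto' h2 fun F => pos_on_finsupp ψ hfin hpd F x
  have hconj : (inner ℂ (Top ψ hfin.toFinset x) x : ℂ) = conj (inner ℂ x (Top ψ hfin.toFinset x) : ℂ) :=
    (inner_conj_symm _ _).symm
  show 0 ≤ RCLike.re (inner ℂ (Top ψ hfin.toFinset x) x : ℂ)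
  rw [RCLike.re_to_complex, hconj, Complex.conj_re]
  exact hpos

end PDAux
end PDAux6

noncomputable section PDAux7
namespace PDAux
set_option synthInstance.maxHeartbeats 1000000
set_option maxHeartbeats 1000000
set_option linter.unusedSectionVars false

variable {G : Type*} [Group G]

lemma lam_one : lam (1 : G) = 1 := by
  rw [lam]
  rw [show Equiv.mulLeft (1 : G)⁻¹ = Equiv.refl G by ext h; simp]
  exact clm_refl

noncomputable instance instCFCℓ2 :
    ContinuousFunctionalCalculus ℝ (lp (fun _ : G => ℂ) 2 →L[ℂ] lp (fun _ : G => ℂ) 2)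
      IsSelfAdjoint :=
  IsSelfAdjoint.instContinuousFunctionalCalculus

noncomputable instance instNUCFCℓ2 :
    NonUnitalContinuousFunctionalCalculus ℝ (lp (fun _ : G => ℂ) 2 →L[ℂ] lp (fun _ : G => ℂ) 2)
      IsSelfAdjoint :=
  IsSelfAdjoint.instNonUnitalContinuousFunctionalCalculus

lemma sqrt_comm_lam (T : lp (fun _ : G => ℂ) 2 →L[ℂ] lp (fun _ : G => ℂ) 2)
    (hT : 0 ≤ T) (hcomm : ∀ g : G, lam g * T = T * lam g) (g : G) :
    lam g * CFC.sqrt T = CFC.sqrt T * lam g := by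
  set Q := CFC.sqrt T with hQ
  have hQ0 : 0 ≤ Q := CFC.sqrt_nonneg _
  have hQ2 : Q * Q = T := CFC.sqrt_mul_sqrt_self T hT
  have hlaminv : ∀ g' : G, lam g' * lam g'⁻¹ = 1 := by
    intro g'; rw [lam_mul_lam, mul_inv_cancel, lam_one]
  have hadj : ContinuousLinearMap.adjoint (lam g) = lam g⁻¹ := adjoint_lam g
  set Q' := lam g * Q * lam g⁻¹ with hQ'
  have hQ'0 : 0 ≤ Q' := by
    rw [ContinuousLinearMap.nonneg_iff_isPositive]
    have := (((ContinuousLinearMap.nonneg_iff_isPositive Q).1 hQ0).conj_adjoint (lam g))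
    rwa [hadj] at this
  have h1 : lam g⁻¹ * lam g = 1 := by rw [lam_mul_lam, inv_mul_cancel, lam_one]
  have h2 : lam g * Q * lam g⁻¹ * lam g = lam g * Q := by
    rw [mul_assoc (lam g * Q), h1, mul_one]
  have hQ'2 : Q' * Q' = T := by
    calc Q' * Q' = lam g * Q * lam g⁻¹ * lam g * Q * lam g⁻¹ := by
          rw [hQ']; simp only [mul_assoc]
      _ = lam g * Q * Q * lam g⁻¹ := by rw [h2]
      _ = lam g * T * lam g⁻¹ := by rw [mul_assoc (lam g), hQ2]
      _ = T * lam g * lam g⁻¹ := by rw [hcomm g]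
      _ = T := by rw [mul_assoc, hlaminv g, mul_one]
  have hQQ' : Q = Q' := hQ ▸ (CFC.sqrt_unique hQ'2 hQ'0).symm ▸ rfl
  have h3 : Q * lam g = lam g * Q * lam g⁻¹ * lam g :=
    congrArg (fun z => z * lam g) (hQQ'.trans hQ')
  rw [h3, h2]

end PDAux
end PDAux7

noncomputable section PDAux8
namespace PDAux
set_option synthInstance.maxHeartbeats 1000000
set_option maxHeartbeats 1000000
set_option linter.unusedSectionVars false

variable {G : Type*} [Group G]

lemma psi_inv_eq_conj (ψ : G → ℂ)
    (hpd : ∀ (n : ℕ) (g : Fin n → G) (c : Fin n → ℂ),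
      0 ≤ (∑ i, ∑ j, c i * conj (c j) * ψ ((g j)⁻¹ * g i)).re ∧
        (∑ i, ∑ j, c i * conj (c j) * ψ ((g j)⁻¹ * g i)).im = 0)
    (hone : ψ 1 = 1) (g : G) : ψ g⁻¹ = conj (ψ g) := by
  obtain ⟨-, h1⟩ := hpd 2 ![1, g] ![1, 1]
  obtain ⟨-, h2⟩ := hpd 2 ![1, g] ![1, Complex.I]
  simp only [Fin.sum_univ_two, Matrix.cons_val_zero, Matrix.cons_val_one, Matrix.head_cons,
    map_one, mul_one, one_mul, inv_one, mul_inv_cancel, inv_mul_cancel, hone,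
    Complex.conj_I] at h1 h2
  apply Complex.ext
  · have := h2
    simp only [Complex.add_im, Complex.mul_im, Complex.I_re, Complex.I_im,
      Complex.one_im, Complex.one_re, Complex.neg_im, Complex.neg_re,
      Complex.conj_re, Complex.conj_im, Complex.mul_re] at this ⊢
    linarith
  · have := h1
    simp only [Complex.add_im, Complex.one_im, Complex.conj_im] at this ⊢
    linarith

end PDAux
end PDAux8

noncomputable section PDAux9
namespace PDAux
set_option synthInstance.maxHeartbeats 1000000
set_option maxHeartbeats 1000000
set_option linter.unusedSectionVars false

variable {G : Type*} [Group G]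

lemma lam_single_one [DecidableEq G] (g : G) :
    lam g (lp.single 2 (1 : G) (1 : ℂ)) = lp.single 2 g (1 : ℂ) := by
  ext h
  rw [lam_apply, lp.single_apply, lp.single_apply]
  by_cases hh : h = g
  · subst hh; simp
  · have : ¬ g⁻¹ * h = 1 := by
      intro hc; exact hh (by rw [← one_mul h, ← mul_inv_cancel g, mul_assoc, hc, mul_one])
    simp [Pi.single_apply, hh, this]

lemma inner_single_one_Top [DecidableEq G] (ψ : G → ℂ) (hfin : (Function.support ψ).Finite)
    (g : G) :
    (inner ℂ (lp.single 2 (1 : G) (1 : ℂ)) (Top ψ hfin.toFinset (lp.single 2 g (1 : ℂ))) : ℂ)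
      = ψ g := by
  rw [lp.inner_single_left, RCLike.inner_apply, map_one, mul_one, Top_apply]
  have : ∀ s : G, ψ s * (lp.single 2 g (1:ℂ) : G → ℂ) (1 * s) = if s = g then ψ s else 0 := by
    intro s
    rw [one_mul, lp.single_apply]
    by_cases hs : s = g <;> simp [hs]
  simp only [this]
  rw [Finset.sum_ite_eq' hfin.toFinset g (fun s => ψ s)]
  by_cases hg : g ∈ hfin.toFinset
  · rw [if_pos hg]
  · rw [if_neg hg]
    by_contra hne
    exact hg (hfin.mem_toFinset.2 fun h0 => hne h0.symm)

end PDAux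
end PDAux9

set_option synthInstance.maxHeartbeats 1000000
set_option maxHeartbeats 1000000
open PDAux

/-- A finitely supported positive definite function `ψ` on a countable discrete group
with `ψ(e) = 1` is the diagonal matrix coefficient of the left regular representation:
there is a unit vector `η ∈ ℓ²(G)` with `⟨η, g⋅η⟩ = ψ(g)` for all `g`. -/
theorem pos_def_finitely_supported_is_matrix_coefficient {G : Type*} [Group G] [Countable G]
    (ψ : G → ℂ) (hfin : (Function.support ψ).Finite)
    (hpd : ∀ (n : ℕ) (g : Fin n → G) (c : Fin n → ℂ),
      0 ≤ (∑ i, ∑ j, c i * conj (c j) * ψ ((g j)⁻¹ * g i)).re ∧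
        (∑ i, ∑ j, c i * conj (c j) * ψ ((g j)⁻¹ * g i)).im = 0)
    (hone : ψ 1 = 1) :
    ∃ η : G → ℂ, Memℓp η 2 ∧ (∑' g : G, ‖η g‖^2 = 1) ∧
      ∀ g : G, ∑' h : G, conj (η h) * η (g⁻¹ * h) = ψ g := by

  classical
  have hsymm : ∀ g : G, ψ g⁻¹ = conj (ψ g) := psi_inv_eq_conj ψ hpd hone
  set T := Top ψ hfin.toFinset with hT
  have hTpos : T.IsPositive := isPositive_Top ψ hfin hsymm hpd
  have hT0 : 0 ≤ T := (ContinuousLinearMap.nonneg_iff_isPositive T).2 hTpos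
  set Q := CFC.sqrt T with hQdef
  have hQ0 : 0 ≤ Q := CFC.sqrt_nonneg _
  have hQ2 : Q * Q = T := CFC.sqrt_mul_sqrt_self T hT0
  have hQsa : IsSelfAdjoint Q :=
    ((ContinuousLinearMap.nonneg_iff_isPositive Q).1 hQ0).isSelfAdjoint
  have hQadj : ContinuousLinearMap.adjoint Q = Q := by
    rw [← ContinuousLinearMap.star_eq_adjoint]; exact hQsa
  have hcomm : ∀ g : G, lam g * Q = Q * lam g :=
    fun g => sqrt_comm_lam T hT0 (fun g' => lam_mul_Top ψ hfin.toFinset g') g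
  set δe := lp.single (E := fun _ : G => ℂ) 2 (1 : G) (1 : ℂ) with hδe
  set η := Q δe with hη
  have hmain : ∀ g : G, ∑' h : G, conj ((η : G → ℂ) h) * (η : G → ℂ) (g⁻¹ * h) = ψ g := by
    intro g
    have h1 : (∑' h : G, conj ((η : G → ℂ) h) * (η : G → ℂ) (g⁻¹ * h))
        = (inner ℂ η (lam g η) : ℂ) := by
      rw [lp.inner_eq_tsum]
      refine tsum_congr fun h => ?_
      rw [RCLike.inner_apply, lam_apply, mul_comm]
    rw [h1]
    have h2 : lam g η = Q (lam g δe) := by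
      have h := congrArg (fun A : lp (fun _ : G => ℂ) 2 →L[ℂ] lp (fun _ : G => ℂ) 2 => A δe)
        (hcomm g)
      simpa [ContinuousLinearMap.mul_apply] using h
    rw [h2]
    have h3 : (inner ℂ η (Q (lam g δe)) : ℂ) = (inner ℂ δe (T (lam g δe)) : ℂ) := by
      rw [hη]
      rw [show Q δe = (ContinuousLinearMap.adjoint Q) δe by rw [hQadj]]
      rw [ContinuousLinearMap.adjoint_inner_left]
      congr 1
      rw [← hQ2]
      rfl
    rw [h3, lam_single_one g, hT, inner_single_one_Top ψ hfin g]
  have hsumm : Summable (fun h : G => ‖(η : G → ℂ) h‖ ^ 2) := by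
    have h := (lp.memℓp η).summable (p := 2) (by norm_num)
    have : ∀ h : G, ‖(η : G → ℂ) h‖ ^ ((2 : ℝ≥0∞).toReal) = ‖(η : G → ℂ) h‖ ^ 2 := by
      intro h
      rw [show ((2 : ℝ≥0∞).toReal) = ((2 : ℕ) : ℝ) by norm_num, Real.rpow_natCast]
    simpa [this] using h
  have hnorm : ∑' h : G, ‖(η : G → ℂ) h‖ ^ 2 = 1 := by
    have h := hmain 1
    simp only [inv_one, one_mul, hone] at h
    have heq : ∀ h : G, conj ((η : G → ℂ) h) * (η : G → ℂ) h
        = ((‖(η : G → ℂ) h‖ ^ 2 : ℝ) : ℂ) := by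
      intro h
      rw [RCLike.conj_mul]
      push_cast
      rfl
    rw [funext heq] at h
    have h2 := (hsumm.hasSum.mapL Complex.ofRealCLM).tsum_eq
    simp only [Complex.ofRealCLM_apply] at h2
    have : ((∑' h : G, ‖(η : G → ℂ) h‖ ^ 2 : ℝ) : ℂ) = ((1 : ℝ) : ℂ) := by
      rw [← h2, h]; norm_num
    exact_mod_cast this
  exact ⟨(η : G → ℂ), lp.memℓp η, hnorm, hmain⟩
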